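/- If f : ℝ≥0 → ℝ is Lipschitz with constant L and f(0) = 0, then for all d × d complex matrices A and B, ‖f_s(A) - f_s(B)‖_F ≤ L·‖A - B‖_F, where f_s(A) = U f(Σ) V* for any singular value decomposition A = U Σ V*, with f applied to the singular values. -/

import Mathlib

/-- The Frobenius (Hilbert–Schmidt) norm of a complex square matrix. -/
noncomputable def frobNorm {d : ℕ} (M : Matrix (Fin d) (Fin d) ℂ) : ℝ :=
  Real.sqrt (∑ i, ∑ j, ‖M i j‖ ^ 2)

open Matrix
namespace Stmt16Aux
set_option linter.unusedSectionVars false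
variable {n : Type*} [Fintype n] [DecidableEq n]

noncomputable def fsq {m : Type*} [Fintype m] (M : Matrix m m ℂ) : ℝ := ∑ i, ∑ j, ‖M i j‖ ^ 2

lemma fsq_nonneg {m : Type*} [Fintype m] (M : Matrix m m ℂ) : 0 ≤ fsq M := by
  apply Finset.sum_nonneg; intros; apply Finset.sum_nonneg; intros; positivity

lemma norm_sq_eq_re (z : ℂ) : ‖z‖^2 = (star z * z).re := by
  exact_mod_cast congrArg Complex.re (Complex.conj_mul' z).symm |>.trans rfl

lemma fsq_eq_trace (M : Matrix n n ℂ) : fsq M = (Matrix.trace (Mᴴ * M)).re := by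
  simp only [Matrix.trace, Matrix.diag, Matrix.mul_apply, Matrix.conjTranspose_apply,
    Complex.re_sum, fsq]
  rw [Finset.sum_comm]
  congr 1; ext i; congr 1; ext j
  exact norm_sq_eq_re _

lemma fsq_unitary_left (P M : Matrix n n ℂ) (h : Pᴴ * P = 1) : fsq (P * M) = fsq M := by
  rw [fsq_eq_trace, fsq_eq_trace, conjTranspose_mul]
  rw [show Mᴴ * Pᴴ * (P * M) = Mᴴ * (Pᴴ * P) * M by noncomm_ring, h, Matrix.mul_one]

lemma fsq_unitary_right (P M : Matrix n n ℂ) (h : P * Pᴴ = 1) : fsq (M * P) = fsq M := by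
  rw [fsq_eq_trace, fsq_eq_trace, conjTranspose_mul]
  rw [show Pᴴ * Mᴴ * (M * P) = Pᴴ * (Mᴴ * M) * P by noncomm_ring,
    Matrix.trace_mul_cycle, show P * Pᴴ * (Mᴴ * M) = (P * Pᴴ) * (Mᴴ * M) by noncomm_ring,
    h, Matrix.one_mul]

/-- Key lemma: Lipschitz bound for Hermitian-type functional calculus in Frobenius norm. -/
lemma key (L : ℝ) (hL : 0 ≤ L) (P Q : Matrix n n ℂ)
    (hP1 : Pᴴ * P = 1) (hP2 : P * Pᴴ = 1) (hQ1 : Qᴴ * Q = 1) (hQ2 : Q * Qᴴ = 1)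
    (a b ga gb : n → ℝ)
    (hg : ∀ i j, |ga i - gb j| ≤ L * |a i - b j|) :
    fsq (P * diagonal (fun i => (ga i : ℂ)) * Pᴴ - Q * diagonal (fun i => (gb i : ℂ)) * Qᴴ)
      ≤ L ^ 2 * fsq (P * diagonal (fun i => (a i : ℂ)) * Pᴴ - Q * diagonal (fun i => (b i : ℂ)) * Qᴴ) := by
  have reduce : ∀ c d : n → ℝ,
      P * diagonal (fun i => (c i : ℂ)) * Pᴴ - Q * diagonal (fun i => (d i : ℂ)) * Qᴴ
      = P * (diagonal (fun i => (c i : ℂ)) * (Pᴴ * Q) - (Pᴴ * Q) * diagonal (fun i => (d i : ℂ))) * Qᴴ := by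
    intro c d
    rw [Matrix.mul_sub, Matrix.sub_mul]
    congr 1
    · rw [show P * (diagonal (fun i => (c i : ℂ)) * (Pᴴ * Q)) * Qᴴ
        = P * diagonal (fun i => (c i : ℂ)) * Pᴴ * (Q * Qᴴ) by noncomm_ring, hQ2, Matrix.mul_one]
    · rw [show P * (Pᴴ * Q * diagonal (fun i => (d i : ℂ))) * Qᴴ
        = (P * Pᴴ) * (Q * diagonal (fun i => (d i : ℂ)) * Qᴴ) by noncomm_ring, hP2, Matrix.one_mul]
  rw [reduce, reduce,
      fsq_unitary_right Qᴴ _ (by rwa [conjTranspose_conjTranspose]),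
      fsq_unitary_right Qᴴ _ (by rwa [conjTranspose_conjTranspose]),
      fsq_unitary_left _ _ hP1, fsq_unitary_left _ _ hP1]
  set W := Pᴴ * Q
  unfold fsq
  rw [Finset.mul_sum]
  refine Finset.sum_le_sum fun i _ => ?_
  rw [Finset.mul_sum]
  refine Finset.sum_le_sum fun j _ => ?_
  have he : ∀ c d : n → ℝ,
      (diagonal (fun i => (c i : ℂ)) * W - W * diagonal (fun i => (d i : ℂ))) i j
        = W i j * ((c i : ℂ) - (d j : ℂ)) := by
    intro c d
    simp [Matrix.sub_apply, Matrix.diagonal_mul, Matrix.mul_diagonal]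
    ring
  rw [he, he]
  rw [norm_mul, norm_mul, mul_pow, mul_pow]
  have hcast : ∀ x y : ℝ, ‖((x : ℂ) - (y : ℂ))‖ = |x - y| := by
    intro x y; rw [← Complex.ofReal_sub, Complex.norm_real, Real.norm_eq_abs]
  rw [hcast, hcast]
  calc ‖W i j‖ ^ 2 * |ga i - gb j| ^ 2
      ≤ ‖W i j‖ ^ 2 * ((L * |a i - b j|) ^ 2) := by
        apply mul_le_mul_of_nonneg_left _ (by positivity)
        exact pow_le_pow_left₀ (abs_nonneg _) (hg i j) 2
    _ = L ^ 2 * (‖W i j‖ ^ 2 * |a i - b j| ^ 2) := by ring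
end Stmt16Aux

namespace Stmt16Aux
open Matrix
variable {n : Type*} [Fintype n] [DecidableEq n]

noncomputable def c2 : ℂ := ((Real.sqrt 2 : ℝ) : ℂ)⁻¹

lemma star_c2 : star c2 = c2 := by
  simp [c2, star_inv₀, Complex.star_def, Complex.conj_ofReal]

lemma c2_mul_c2 : c2 * c2 = (2 : ℂ)⁻¹ := by
  have h : ((Real.sqrt 2 : ℝ) : ℂ) * ((Real.sqrt 2 : ℝ) : ℂ) = 2 := by
    norm_cast
    rw [Real.mul_self_sqrt (by norm_num)]
  rw [c2, ← mul_inv, h]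

noncomputable def dil (U V : Matrix n n ℂ) : Matrix (n ⊕ n) (n ⊕ n) ℂ :=
  c2 • fromBlocks U U V (-V)

lemma dil_conjTranspose (U V : Matrix n n ℂ) :
    (dil U V)ᴴ = c2 • fromBlocks Uᴴ Vᴴ Uᴴ (-Vᴴ) := by
  rw [dil, conjTranspose_smul, star_c2, fromBlocks_conjTranspose, conjTranspose_neg]

lemma half_smul_two_blocks :
    ((2:ℂ))⁻¹ • (fromBlocks 2 0 0 2 : Matrix (n ⊕ n) (n ⊕ n) ℂ) = 1 := by
  rw [fromBlocks_smul, ← fromBlocks_one]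
  rw [smul_zero]
  congr 1 <;>
    rw [show (2 : Matrix n n ℂ) = (2:ℂ) • 1 by rw [two_smul, one_add_one_eq_two]] <;>
    rw [smul_smul] <;> norm_num

lemma dil_unitary_left (U V : Matrix n n ℂ) (hU : Uᴴ * U = 1) (hV : Vᴴ * V = 1) :
    (dil U V)ᴴ * dil U V = 1 := by
  rw [dil_conjTranspose, dil, Matrix.smul_mul, Matrix.mul_smul, smul_smul, c2_mul_c2,
    fromBlocks_multiply]
  simp only [Matrix.mul_neg, Matrix.neg_mul, neg_neg, hU, hV, add_neg_cancel]
  rw [show ((1:Matrix n n ℂ) + 1 = 2) from one_add_one_eq_two]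
  exact half_smul_two_blocks

lemma dil_unitary_right (U V : Matrix n n ℂ) (hU : U * Uᴴ = 1) (hV : V * Vᴴ = 1) :
    dil U V * (dil U V)ᴴ = 1 := by
  rw [dil_conjTranspose, dil, Matrix.smul_mul, Matrix.mul_smul, smul_smul, c2_mul_c2,
    fromBlocks_multiply]
  simp only [Matrix.mul_neg, Matrix.neg_mul, neg_neg, hU, hV, add_neg_cancel]
  rw [show ((1:Matrix n n ℂ) + 1 = 2) from one_add_one_eq_two]
  exact half_smul_two_blocks

lemma dil_conj (U V : Matrix n n ℂ) (s : n → ℝ) :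
    dil U V * diagonal (fun i => ((Sum.elim s (fun j => -s j)) i : ℂ)) * (dil U V)ᴴ
      = fromBlocks 0 (U * diagonal (fun i => (s i : ℂ)) * Vᴴ)
          (V * diagonal (fun i => (s i : ℂ)) * Uᴴ) 0 := by
  have hD : (diagonal (fun i => ((Sum.elim s (fun j => -s j)) i : ℂ)) : Matrix (n ⊕ n) (n ⊕ n) ℂ)
      = fromBlocks (diagonal fun i => (s i : ℂ)) 0 0 (-(diagonal fun i => (s i : ℂ))) := by
    ext (i | i) (j | j) <;> simp [diagonal_apply, fromBlocks, apply_ite] <;>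
      split_ifs <;> simp_all
  rw [hD, dil_conjTranspose, dil, Matrix.smul_mul, Matrix.smul_mul, Matrix.mul_smul,
    smul_smul, c2_mul_c2, fromBlocks_multiply, fromBlocks_multiply]
  simp only [Matrix.mul_neg, Matrix.neg_mul, neg_neg, Matrix.mul_zero, Matrix.zero_mul,
    add_zero, zero_add, add_neg_cancel, neg_add_cancel]
  rw [← two_smul ℂ ((U * diagonal fun i => ((s i : ℝ) : ℂ)) * Vᴴ),
    ← two_smul ℂ ((V * diagonal fun i => ((s i : ℝ) : ℂ)) * Uᴴ), fromBlocks_smul]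
  congr 1 <;> first
    | simp
    | (rw [smul_smul]; norm_num)
end Stmt16Aux

namespace Stmt16Aux
open Matrix
variable {n : Type*} [Fintype n] [DecidableEq n]

lemma fsq_conjTranspose (M : Matrix n n ℂ) : fsq Mᴴ = fsq M := by
  unfold fsq
  rw [Finset.sum_comm]
  simp [conjTranspose_apply]

lemma fsq_fromBlocks (M M' : Matrix n n ℂ) :
    fsq (fromBlocks 0 M M' 0) = fsq M + fsq M' := by
  unfold fsq
  rw [Fintype.sum_sum_type]
  simp [Fintype.sum_sum_type, fromBlocks]

lemma fromBlocks_off_sub (M M' N N' : Matrix n n ℂ) :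
    fromBlocks 0 M M' 0 - fromBlocks 0 N N' 0 = fromBlocks 0 (M - N) (M' - N') 0 := by
  simp [sub_eq_add_neg, fromBlocks_neg, fromBlocks_add]

end Stmt16Aux

open Matrix in
theorem stmt_16 (f : ℝ → ℝ) (L : ℝ) (hL : 0 ≤ L) (h0 : f 0 = 0)
    (hf : ∀ x y : ℝ, 0 ≤ x → 0 ≤ y → |f x - f y| ≤ L * |x - y|)
    (d : ℕ)
    (UA VA UB VB : Matrix (Fin d) (Fin d) ℂ)
    (hUA : UA ∈ Matrix.unitaryGroup (Fin d) ℂ)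
    (hVA : VA ∈ Matrix.unitaryGroup (Fin d) ℂ)
    (hUB : UB ∈ Matrix.unitaryGroup (Fin d) ℂ)
    (hVB : VB ∈ Matrix.unitaryGroup (Fin d) ℂ)
    (σA σB : Fin d → ℝ) (hσA : ∀ i, 0 ≤ σA i) (hσB : ∀ i, 0 ≤ σB i)
    (A B fsA fsB : Matrix (Fin d) (Fin d) ℂ)
    (hA : A = UA * Matrix.diagonal (fun i => (σA i : ℂ)) * VAᴴ)
    (hB : B = UB * Matrix.diagonal (fun i => (σB i : ℂ)) * VBᴴ)
    (hfsA : fsA = UA * Matrix.diagonal (fun i => (f (σA i) : ℂ)) * VAᴴ)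
    (hfsB : fsB = UB * Matrix.diagonal (fun i => (f (σB i) : ℂ)) * VBᴴ) :
    frobNorm (fsA - fsB) ≤ L * frobNorm (A - B) := by
  classical
  open Stmt16Aux in
  -- basic Lipschitz facts
  have habs : ∀ s : ℝ, 0 ≤ s → |f s| ≤ L * s := by
    intro s hs
    have := hf s 0 hs le_rfl
    simpa [h0, abs_of_nonneg hs] using this
  -- unitarity of factors
  have hUA1 : UAᴴ * UA = 1 := by
    simpa [Matrix.star_eq_conjTranspose] using hUA.1
  have hUA2 : UA * UAᴴ = 1 := by
    simpa [Matrix.star_eq_conjTranspose] using hUA.2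
  have hVA1 : VAᴴ * VA = 1 := by
    simpa [Matrix.star_eq_conjTranspose] using hVA.1
  have hVA2 : VA * VAᴴ = 1 := by
    simpa [Matrix.star_eq_conjTranspose] using hVA.2
  have hUB1 : UBᴴ * UB = 1 := by
    simpa [Matrix.star_eq_conjTranspose] using hUB.1
  have hUB2 : UB * UBᴴ = 1 := by
    simpa [Matrix.star_eq_conjTranspose] using hUB.2
  have hVB1 : VBᴴ * VB = 1 := by
    simpa [Matrix.star_eq_conjTranspose] using hVB.1
  have hVB2 : VB * VBᴴ = 1 := by
    simpa [Matrix.star_eq_conjTranspose] using hVB.2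
  set P := dil UA VA with hP
  set Q := dil UB VB with hQ
  set a : Fin d ⊕ Fin d → ℝ := Sum.elim σA (fun j => -σA j) with ha
  set b : Fin d ⊕ Fin d → ℝ := Sum.elim σB (fun j => -σB j) with hb
  set ga : Fin d ⊕ Fin d → ℝ :=
    Sum.elim (fun i => f (σA i)) (fun j => -(fun i => f (σA i)) j) with hga
  set gb : Fin d ⊕ Fin d → ℝ :=
    Sum.elim (fun i => f (σB i)) (fun j => -(fun i => f (σB i)) j) with hgb
  have hg : ∀ i j, |ga i - gb j| ≤ L * |a i - b j| := by
    rintro (i | i) (j | j)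
    · simpa [ha, hb, hga, hgb] using hf (σA i) (σB j) (hσA i) (hσB j)
    · simp only [ha, hb, hga, hgb, Sum.elim_inl, Sum.elim_inr, sub_neg_eq_add]
      have h1 : |f (σA i) + f (σB j)| ≤ |f (σA i)| + |f (σB j)| := abs_add_le _ _
      have h2 : |σA i + σB j| = σA i + σB j :=
        abs_of_nonneg (by have := hσA i; have := hσB j; linarith)
      rw [h2]
      calc |f (σA i) + f (σB j)| ≤ |f (σA i)| + |f (σB j)| := h1
        _ ≤ L * σA i + L * σB j := add_le_add (habs _ (hσA i)) (habs _ (hσB j))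
        _ = L * (σA i + σB j) := by ring
    · simp only [ha, hb, hga, hgb, Sum.elim_inl, Sum.elim_inr]
      have h2 : |-σA i - σB j| = σA i + σB j := by
        rw [show -σA i - σB j = -(σA i + σB j) by ring, abs_neg]
        exact abs_of_nonneg (by have := hσA i; have := hσB j; linarith)
      rw [h2, show -f (σA i) - f (σB j) = -(f (σA i) + f (σB j)) by ring, abs_neg]
      calc |f (σA i) + f (σB j)| ≤ |f (σA i)| + |f (σB j)| := abs_add_le _ _
        _ ≤ L * σA i + L * σB j := add_le_add (habs _ (hσA i)) (habs _ (hσB j))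
        _ = L * (σA i + σB j) := by ring
    · simp only [ha, hb, hga, hgb, Sum.elim_inr]
      rw [show -f (σA i) - -f (σB j) = -(f (σA i) - f (σB j)) by ring, abs_neg,
        show -σA i - -σB j = -(σA i - σB j) by ring, abs_neg]
      exact hf _ _ (hσA i) (hσB j)
  have hkey := Stmt16Aux.key L hL P Q
    (dil_unitary_left _ _ hUA1 hVA1) (dil_unitary_right _ _ hUA2 hVA2)
    (dil_unitary_left _ _ hUB1 hVB1) (dil_unitary_right _ _ hUB2 hVB2)
    a b ga gb hg
  -- identify the dilated matrices
  have hconjA : P * diagonal (fun i => (a i : ℂ)) * Pᴴ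
      = fromBlocks 0 A (VA * diagonal (fun i => (σA i : ℂ)) * UAᴴ) 0 := by
    rw [hP, ha, dil_conj, ← hA]
  have hconjB : Q * diagonal (fun i => (b i : ℂ)) * Qᴴ
      = fromBlocks 0 B (VB * diagonal (fun i => (σB i : ℂ)) * UBᴴ) 0 := by
    rw [hQ, hb, dil_conj, ← hB]
  have hconjgA : P * diagonal (fun i => (ga i : ℂ)) * Pᴴ
      = fromBlocks 0 fsA (VA * diagonal (fun i => (f (σA i) : ℂ)) * UAᴴ) 0 := by
    rw [hP, hga, dil_conj, ← hfsA]
  have hconjgB : Q * diagonal (fun i => (gb i : ℂ)) * Qᴴ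
      = fromBlocks 0 fsB (VB * diagonal (fun i => (f (σB i) : ℂ)) * UBᴴ) 0 := by
    rw [hQ, hgb, dil_conj, ← hfsB]
  -- lower-left blocks are conjugate transposes of upper-right
  have hdiag : ∀ v : Fin d → ℝ,
      (diagonal (fun i => (v i : ℂ)))ᴴ = diagonal (fun i => (v i : ℂ)) := by
    intro v
    rw [diagonal_conjTranspose,
      show (star fun i => ((v i : ℝ) : ℂ)) = fun i => ((v i : ℝ) : ℂ) from
        funext fun i => Complex.conj_ofReal _]
  have hdiagA := hdiag σA
  have hdiagB := hdiag σB
  have hdiaggA := hdiag (fun i => f (σA i))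
  have hdiaggB := hdiag (fun i => f (σB i))
  have hAH : VA * diagonal (fun i => (σA i : ℂ)) * UAᴴ = Aᴴ := by
    rw [hA, conjTranspose_mul, conjTranspose_mul, conjTranspose_conjTranspose, hdiagA,
      Matrix.mul_assoc]
  have hBH : VB * diagonal (fun i => (σB i : ℂ)) * UBᴴ = Bᴴ := by
    rw [hB, conjTranspose_mul, conjTranspose_mul, conjTranspose_conjTranspose, hdiagB,
      Matrix.mul_assoc]
  have hfsAH : VA * diagonal (fun i => (f (σA i) : ℂ)) * UAᴴ = fsAᴴ := by
    rw [hfsA, conjTranspose_mul, conjTranspose_mul, conjTranspose_conjTranspose, hdiaggA,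
      Matrix.mul_assoc]
  have hfsBH : VB * diagonal (fun i => (f (σB i) : ℂ)) * UBᴴ = fsBᴴ := by
    rw [hfsB, conjTranspose_mul, conjTranspose_mul, conjTranspose_conjTranspose, hdiaggB,
      Matrix.mul_assoc]
  rw [hconjA, hconjB, hconjgA, hconjgB, hAH, hBH, hfsAH, hfsBH,
    fromBlocks_off_sub, fromBlocks_off_sub, fsq_fromBlocks, fsq_fromBlocks,
    ← conjTranspose_sub, ← conjTranspose_sub, fsq_conjTranspose, fsq_conjTranspose] at hkey
  have hfsq : fsq (fsA - fsB) ≤ L ^ 2 * fsq (A - B) := by nlinarith [hkey]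
  have h1 : frobNorm (fsA - fsB) = Real.sqrt (fsq (fsA - fsB)) := rfl
  have h2 : frobNorm (A - B) = Real.sqrt (fsq (A - B)) := rfl
  rw [h1, h2]
  calc Real.sqrt (fsq (fsA - fsB)) ≤ Real.sqrt (L ^ 2 * fsq (A - B)) :=
        Real.sqrt_le_sqrt hfsq
    _ = L * Real.sqrt (fsq (A - B)) := by
        rw [Real.sqrt_mul (sq_nonneg L), Real.sqrt_sq hL]
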